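/- For all i ≠ j in {0,…,n} and all nonzero t, u ∈ F, the type-A diagonal relation holds: h_{i,j}(t) · h_{i,j}(u) = h_{i,j}(t·u). -/

import Mathlib

open Matrix

/-- `Ea F n p q` : the (n+1)×(n+1) matrix over `F` with a 1 in entry (p,q) and 0 elsewhere. -/
def Ea (F : Type*) [Field F] (n : ℕ) (p q : Fin (n + 1)) :
    Matrix (Fin (n + 1)) (Fin (n + 1)) F :=
  Matrix.single p q 1

/-- Type-A root matrix `M_{i,j}(t) = I + t • E_{i,j}`. -/
def Ma (F : Type*) [Field F] (n : ℕ) (i j : Fin (n + 1)) (t : F) :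
    Matrix (Fin (n + 1)) (Fin (n + 1)) F :=
  1 + t • Ea F n i j

/-- `g_{i,j}(t) := M_{i,j}(t) · M_{j,i}(−t⁻¹) · M_{i,j}(t)`. -/
def gA (F : Type*) [Field F] (n : ℕ) (i j : Fin (n + 1)) (t : F) :
    Matrix (Fin (n + 1)) (Fin (n + 1)) F :=
  Ma F n i j t * Ma F n j i (-t⁻¹) * Ma F n i j t

/-- `h_{i,j}(t) := g_{i,j}(t) · g_{i,j}(−1)`. -/
def hA (F : Type*) [Field F] (n : ℕ) (i j : Fin (n + 1)) (t : F) :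
    Matrix (Fin (n + 1)) (Fin (n + 1)) F :=
  gA F n i j t * gA F n i j (-1)

lemma gA_eq (F : Type*) [Field F] (n : ℕ) (i j : Fin (n + 1)) (hij : i ≠ j)
    (t : F) (ht : t ≠ 0) :
    gA F n i j t = 1 + t • Ea F n i j - t⁻¹ • Ea F n j i - Ea F n i i - Ea F n j j := by
  have hji := hij.symm
  unfold gA Ma Ea
  simp only [mul_add, add_mul, Matrix.smul_mul, Matrix.mul_smul, smul_smul, one_mul, mul_one,
    Matrix.single_mul_single_same, Matrix.single_mul_single_of_ne, ne_eq, hij, hij.symm, not_false_iff,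
    smul_zero, mul_neg, neg_mul, mul_inv_cancel₀ ht, inv_mul_cancel₀ ht, neg_smul, neg_neg]
  module

lemma hA_eq (F : Type*) [Field F] (n : ℕ) (i j : Fin (n + 1)) (hij : i ≠ j)
    (t : F) (ht : t ≠ 0) :
    hA F n i j t = 1 + (t - 1) • Ea F n i i + (t⁻¹ - 1) • Ea F n j j := by
  have hji := hij.symm
  unfold hA
  rw [gA_eq F n i j hij t ht, gA_eq F n i j hij (-1) (by norm_num)]
  unfold Ea
  simp only [mul_add, add_mul, sub_mul, mul_sub, Matrix.smul_mul, Matrix.mul_smul, smul_smul,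
    one_mul, mul_one, Matrix.single_mul_single_same, Matrix.single_mul_single_of_ne, ne_eq, hij, hij.symm,
    not_false_iff, smul_zero, mul_neg, neg_mul, mul_inv_cancel₀ ht, inv_mul_cancel₀ ht,
    neg_smul, neg_neg, inv_neg, inv_one, sub_zero, zero_sub]
  module

/-- The type-A diagonal relation: for `i ≠ j` and nonzero `t, u`,
`h_{i,j}(t) · h_{i,j}(u) = h_{i,j}(t·u)`. -/
theorem typeA_diagonal_relation (F : Type*) [Field F] (n : ℕ) (hn : 1 ≤ n)
    (i j : Fin (n + 1)) (hij : i ≠ j) (t u : F) (ht : t ≠ 0) (hu : u ≠ 0) :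
    hA F n i j t * hA F n i j u = hA F n i j (t * u) := by
  rw [hA_eq F n i j hij t ht, hA_eq F n i j hij u hu,
    hA_eq F n i j hij (t * u) (mul_ne_zero ht hu), mul_inv]
  unfold Ea
  simp only [mul_add, add_mul, Matrix.smul_mul, Matrix.mul_smul, smul_smul, one_mul, mul_one,
    Matrix.single_mul_single_same, Matrix.single_mul_single_of_ne, ne_eq, hij, hij.symm, not_false_iff,
    smul_zero, add_zero, zero_add]
  module
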